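/- Let p be an odd prime, r ≥ 1, and t an integer such that t² − 4 is a nonzero quadratic residue modulo p. Then the number of matrices γ ∈ SL₂(Z/p^rZ) with trace γ ≡ t (mod p^r) equals p^{2r−1}(p+1). -/

import Mathlib

lemma lin3_aux {F : Type*} [Field F] [Fintype F] (a b c d : F) (ha : a ≠ 0) :
    Nat.card {v : F × F × F // a * v.1 + b * v.2.1 + c * v.2.2 = d} = Fintype.card F ^ 2 := by
  have e : {v : F × F × F // a * v.1 + b * v.2.1 + c * v.2.2 = d} ≃ F × F :=
  { toFun := fun v => (v.1.2.1, v.1.2.2)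
    invFun := fun w => ⟨((d - b * w.1 - c * w.2) / a, w.1, w.2), by field_simp; ring⟩
    left_inv := fun v => by
      obtain ⟨⟨x, y, z⟩, hv⟩ := v
      apply Subtype.ext
      simp only at hv ⊢
      have hx : (d - b * y - c * z) / a = x := by
        field_simp
        linear_combination -hv
      rw [hx]
    right_inv := fun w => rfl }
  rw [Nat.card_congr e, Nat.card_prod, Nat.card_eq_fintype_card, sq]

def shuf12 {F : Type*} [CommRing F] (a b c d : F) :
    {v : F × F × F // a * v.1 + b * v.2.1 + c * v.2.2 = d} ≃
    {v : F × F × F // b * v.1 + a * v.2.1 + c * v.2.2 = d} :=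
  { toFun := fun v => ⟨(v.1.2.1, v.1.1, v.1.2.2), by linear_combination v.2⟩
    invFun := fun v => ⟨(v.1.2.1, v.1.1, v.1.2.2), by linear_combination v.2⟩
    left_inv := fun v => rfl
    right_inv := fun v => rfl }

def shuf13 {F : Type*} [CommRing F] (a b c d : F) :
    {v : F × F × F // a * v.1 + b * v.2.1 + c * v.2.2 = d} ≃
    {v : F × F × F // c * v.1 + b * v.2.1 + a * v.2.2 = d} :=
  { toFun := fun v => ⟨(v.1.2.2, v.1.2.1, v.1.1), by linear_combination v.2⟩
    invFun := fun v => ⟨(v.1.2.2, v.1.2.1, v.1.1), by linear_combination v.2⟩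
    left_inv := fun v => rfl
    right_inv := fun v => rfl }

lemma lin3_card {F : Type*} [Field F] [Fintype F] (a b c d : F) (h : ¬(a = 0 ∧ b = 0 ∧ c = 0)) :
    Nat.card {v : F × F × F // a * v.1 + b * v.2.1 + c * v.2.2 = d} = Fintype.card F ^ 2 := by
  by_cases ha : a = 0
  · by_cases hb : b = 0
    · have hc : c ≠ 0 := fun hc => h ⟨ha, hb, hc⟩
      rw [Nat.card_congr (shuf13 a b c d)]
      exact lin3_aux c b a d hc
    · rw [Nat.card_congr (shuf12 a b c d)]
      exact lin3_aux b a c d hb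
  · exact lin3_aux a b c d ha

variable {p : ℕ} [Fact p.Prime]

lemma pNZ (p r : ℕ) [Fact p.Prime] : NeZero (p^r) := ⟨pow_ne_zero r (Fact.out : p.Prime).ne_zero⟩

/-- φ x = p^r * x, landing in ZMod (p^(r+1)). -/
def phi (p r : ℕ) (x : ZMod p) : ZMod (p^(r+1)) := ((p^r * x.val : ℕ) : ZMod (p^(r+1)))

lemma mul_val_lt (p r : ℕ) [Fact p.Prime] (x : ZMod p) : p^r * x.val < p^(r+1) := by
  haveI := pNZ p 1
  rw [pow_succ]
  exact (Nat.mul_lt_mul_left (pow_pos (Fact.out : p.Prime).pos r)).mpr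
    (by simpa using x.val_lt)

lemma phi_eq_of_modEq (p r : ℕ) {m n : ℕ} (h : m ≡ n [MOD p]) :
    ((p^r * m : ℕ) : ZMod (p^(r+1))) = ((p^r * n : ℕ) : ZMod (p^(r+1))) := by
  rw [ZMod.natCast_eq_natCast_iff]
  have := Nat.ModEq.mul_left' (c := p^r) h
  rwa [← pow_succ] at this

lemma phi_injective (r : ℕ) : Function.Injective (phi p r) := by
  haveI := pNZ p (r+1)
  haveI := pNZ p 1
  intro x y h
  have hx := ZMod.val_cast_of_lt (mul_val_lt p r x)
  have hy := ZMod.val_cast_of_lt (mul_val_lt p r y)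
  unfold phi at h
  have : p^r * x.val = p^r * y.val := by rw [← hx, ← hy, h]
  have hv : x.val = y.val :=
    Nat.eq_of_mul_eq_mul_left (pow_pos (Fact.out : p.Prime).pos r) this
  have : ((x.val : ℕ) : ZMod p) = ((y.val : ℕ) : ZMod p) := by rw [hv]
  simpa [ZMod.natCast_rightInverse x, ZMod.natCast_rightInverse y] using this

lemma phi_add (r : ℕ) (x y : ZMod p) : phi p r (x + y) = phi p r x + phi p r y := by
  haveI := pNZ p 1
  unfold phi
  rw [phi_eq_of_modEq p r (m := (x+y).val) (n := x.val + y.val)]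
  · push_cast; ring
  · rw [ZMod.val_add]; exact (Nat.mod_modEq _ p)

/-- reduction to ZMod p -/
def redp (p r : ℕ) [Fact p.Prime] : ZMod (p^(r+1)) →+* ZMod p :=
  ZMod.castHom (dvd_pow_self p (Nat.succ_ne_zero r)) (ZMod p)

lemma redp_natCast (r : ℕ) (m : ℕ) : redp p r ((m : ℕ) : ZMod (p^(r+1))) = (m : ZMod p) :=
  map_natCast _ m

lemma phi_mul (r : ℕ) (u : ZMod (p^(r+1))) (x : ZMod p) :
    u * phi p r x = phi p r (redp p r u * x) := by
  haveI := pNZ p 1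
  haveI := pNZ p (r+1)
  unfold phi
  have hu : ((u.val : ℕ) : ZMod (p^(r+1))) = u := ZMod.natCast_rightInverse u
  have hL : u * ((p^r * x.val : ℕ) : ZMod (p^(r+1))) = ((u.val * (p^r * x.val) : ℕ) : ZMod (p^(r+1))) := by
    rw [Nat.cast_mul (u.val) (p^r * x.val), hu]
  rw [hL]
  have h1 : u.val * (p^r * x.val) = p^r * (u.val * x.val) := by ring
  rw [h1, phi_eq_of_modEq p r (m := u.val * x.val) (n := (redp p r u * x).val)]
  have : redp p r u = ((u.val : ℕ) : ZMod p) := by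
    conv_lhs => rw [← hu]
    exact redp_natCast r u.val

  rw [ZMod.val_mul, this, ZMod.val_natCast]
  calc u.val * x.val ≡ u.val % p * x.val [MOD p] := ((Nat.mod_modEq _ p).symm.mul_right _)
    _ ≡ u.val % p * x.val % p [MOD p] := (Nat.mod_modEq _ p).symm

lemma phi_mul_phi (r : ℕ) (hr : 1 ≤ r) (x y : ZMod p) : phi p r x * phi p r y = 0 := by
  unfold phi
  rw [← Nat.cast_mul, ZMod.natCast_eq_zero_iff]
  have h1 : p^(r+1) ∣ p^r * p^r := by
    rw [← pow_add]; exact pow_dvd_pow p (by omega)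
  exact dvd_trans h1 ⟨x.val * y.val, by ring⟩

/-- reduction ZMod (p^(r+1)) → ZMod (p^r) -/
def redr (p r : ℕ) [Fact p.Prime] : ZMod (p^(r+1)) →+* ZMod (p^r) :=
  haveI := pNZ p r
  ZMod.castHom (pow_dvd_pow p (Nat.le_succ r)) (ZMod (p^r))

lemma redr_phi (r : ℕ) (x : ZMod p) : redr p r (phi p r x) = 0 := by
  haveI := pNZ p r
  unfold phi redr
  rw [map_natCast, Nat.cast_mul, ZMod.natCast_self, zero_mul]

lemma phi_surj (r : ℕ) (E : ZMod (p^(r+1))) (hE : redr p r E = 0) : ∃ x, phi p r x = E := by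
  haveI := pNZ p r
  haveI := pNZ p (r+1)
  have hp : 0 < p := (Fact.out : p.Prime).pos
  have hE2 : E = ((E.val : ℕ) : ZMod (p^(r+1))) := (ZMod.natCast_rightInverse E).symm
  have : ((E.val : ℕ) : ZMod (p^r)) = 0 := by
    rw [← hE]
    unfold redr
    conv_rhs => rw [hE2]
    rw [map_natCast]
  rw [ZMod.natCast_eq_zero_iff] at this
  obtain ⟨k, hk⟩ := this
  have hklt : k < p := by
    have := E.val_lt
    rw [hk, pow_succ] at this
    exact lt_of_mul_lt_mul_left this (Nat.zero_le _)
  refine ⟨(k : ZMod p), ?_⟩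
  have hfin : ((p^r * k : ℕ) : ZMod (p^(r+1))) = E := by
    rw [← hk]; exact ZMod.natCast_rightInverse E
  unfold phi
  rw [ZMod.val_cast_of_lt hklt]
  exact hfin

lemma redp_phi' (r : ℕ) (hr : 1 ≤ r) (x : ZMod p) : (ZMod.castHom (dvd_pow_self p (Nat.succ_ne_zero r)) (ZMod p)) (phi p r x) = 0 := by
  unfold phi
  rw [map_natCast, Nat.cast_mul]
  have : ((p^r : ℕ) : ZMod p) = 0 := by
    rw [ZMod.natCast_eq_zero_iff]
    exact dvd_pow_self p (by omega)
  rw [this, zero_mul]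

lemma fiber_card (r : ℕ) (hr : 1 ≤ r) (t : ℤ)
    (hleg : legendreSym p (t^2 - 4) = 1)
    (a0 b0 c0 : ZMod (p^r)) (h0 : b0 * c0 = a0 * ((t : ZMod (p^r)) - a0) - 1) :
    Nat.card {v : ZMod (p^(r+1)) × ZMod (p^(r+1)) × ZMod (p^(r+1)) //
      (v.2.1 * v.2.2 = v.1 * ((t : ZMod (p^(r+1))) - v.1) - 1) ∧
      redr p r v.1 = a0 ∧ redr p r v.2.1 = b0 ∧ redr p r v.2.2 = c0} = p^2 := by
  haveI := pNZ p r
  haveI := pNZ p (r+1)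
  set T : ZMod (p^(r+1)) := (t : ZMod (p^(r+1))) with hT
  set A0 : ZMod (p^(r+1)) := ((a0.val : ℕ) : ZMod (p^(r+1))) with hA0def
  set B0 : ZMod (p^(r+1)) := ((b0.val : ℕ) : ZMod (p^(r+1))) with hB0def
  set C0 : ZMod (p^(r+1)) := ((c0.val : ℕ) : ZMod (p^(r+1))) with hC0def
  have hrA0 : redr p r A0 = a0 := by
    rw [hA0def]; unfold redr; rw [map_natCast]; exact ZMod.natCast_rightInverse a0
  have hrB0 : redr p r B0 = b0 := by
    rw [hB0def]; unfold redr; rw [map_natCast]; exact ZMod.natCast_rightInverse b0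
  have hrC0 : redr p r C0 = c0 := by
    rw [hC0def]; unfold redr; rw [map_natCast]; exact ZMod.natCast_rightInverse c0
  have hrT : redr p r T = ((t : ℤ) : ZMod (p^r)) := by rw [hT]; unfold redr; rw [map_intCast]
  have hE : redr p r (A0 * (T - A0) - 1 - B0 * C0) = 0 := by
    rw [map_sub, map_sub, map_mul, map_mul, map_sub, map_one, hrA0, hrB0, hrC0, hrT, h0]
    ring
  obtain ⟨e, he⟩ := phi_surj r _ hE
  set α : ZMod p := redp p r (2 * A0 - T) with hα
  set β : ZMod p := redp p r C0 with hβ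
  set γ : ZMod p := redp p r B0 with hγ
  -- the key equivalence
  have key : ∀ x y z : ZMod p,
      ((B0 + phi p r y) * (C0 + phi p r z) = (A0 + phi p r x) * (T - (A0 + phi p r x)) - 1)
      ↔ (α * x + β * y + γ * z = e) := by
    intro x y z
    have iff1 : ((B0 + phi p r y) * (C0 + phi p r z) = (A0 + phi p r x) * (T - (A0 + phi p r x)) - 1)
        ↔ ((2 * A0 - T) * phi p r x + C0 * phi p r y + B0 * phi p r z = A0 * (T - A0) - 1 - B0 * C0) := by
      constructor
      · intro h
        linear_combination h - phi_mul_phi r hr y z - phi_mul_phi r hr x x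
      · intro h
        linear_combination h + phi_mul_phi r hr y z + phi_mul_phi r hr x x
    rw [iff1, ← he, phi_mul r _ x, phi_mul r _ y, phi_mul r _ z, ← phi_add, ← phi_add,
      ← hα, ← hβ, ← hγ]
    exact ⟨fun h => phi_injective r h, fun h => by rw [h]⟩
  -- coefficients not all zero
  have hcoef : ¬(α = 0 ∧ β = 0 ∧ γ = 0) := by
    rintro ⟨h1, h2, h3⟩
    have hEp : redp p r (A0 * (T - A0) - 1 - B0 * C0) = 0 := by
      rw [← he]
      exact redp_phi' r hr e
    rw [map_sub, map_sub, map_mul, map_mul, map_one] at hEp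
    have hTp : redp p r T = ((t : ℤ) : ZMod p) := by rw [hT]; unfold redp; rw [map_intCast]
    set ab := redp p r A0 with hab
    have h4 : 2 * ab - ((t : ℤ) : ZMod p) = 0 := by
      rw [← hTp]; rw [← h1, hα, map_sub, map_mul, map_ofNat, ← hab]
    have h5 : ab * (((t : ℤ) : ZMod p) - ab) - 1 = 0 := by
      rw [← hβ, ← hγ, h2, h3, map_sub, hTp, ← hab] at hEp
      linear_combination hEp
    have htt : ((t : ℤ) : ZMod p)^2 - 4 = 0 := by
      linear_combination 4 * h5 - (((t : ℤ) : ZMod p) - 2 * ab) * h4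
    have h0' : ((t^2 - 4 : ℤ) : ZMod p) = 0 := by push_cast; linear_combination htt
    have hz := (legendreSym.eq_zero_iff p _).mpr h0'
    rw [hleg] at hz
    exact one_ne_zero hz
  -- the bijection
  let f : {w : ZMod p × ZMod p × ZMod p // α * w.1 + β * w.2.1 + γ * w.2.2 = e} →
      {v : ZMod (p^(r+1)) × ZMod (p^(r+1)) × ZMod (p^(r+1)) //
        (v.2.1 * v.2.2 = v.1 * ((t : ZMod (p^(r+1))) - v.1) - 1) ∧
        redr p r v.1 = a0 ∧ redr p r v.2.1 = b0 ∧ redr p r v.2.2 = c0} :=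
    fun w => ⟨(A0 + phi p r w.1.1, B0 + phi p r w.1.2.1, C0 + phi p r w.1.2.2),
      ⟨(key w.1.1 w.1.2.1 w.1.2.2).mpr w.2,
       by rw [map_add, redr_phi, add_zero, hrA0],
       by rw [map_add, redr_phi, add_zero, hrB0],
       by rw [map_add, redr_phi, add_zero, hrC0]⟩⟩
  have hbij : Function.Bijective f := by
    constructor
    · rintro ⟨⟨x, y, z⟩, hw⟩ ⟨⟨x', y', z'⟩, hw'⟩ hff
      simp only [f, Subtype.mk.injEq, Prod.mk.injEq] at hff
      obtain ⟨h1, h2, h3⟩ := hff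
      have e1 : x = x' := phi_injective r (by linear_combination h1)
      have e2 : y = y' := phi_injective r (by linear_combination h2)
      have e3 : z = z' := phi_injective r (by linear_combination h3)
      apply Subtype.ext
      simp only [e1, e2, e3]
    · rintro ⟨⟨a, b, c⟩, heq, ha, hb, hc⟩
      have h1 : redr p r (a - A0) = 0 := by rw [map_sub, hrA0, ha, sub_self]
      have h2 : redr p r (b - B0) = 0 := by rw [map_sub, hrB0, hb, sub_self]
      have h3 : redr p r (c - C0) = 0 := by rw [map_sub, hrC0, hc, sub_self]
      obtain ⟨x, hx⟩ := phi_surj r _ h1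
      obtain ⟨y, hy⟩ := phi_surj r _ h2
      obtain ⟨z, hz⟩ := phi_surj r _ h3
      have ha' : a = A0 + phi p r x := by rw [hx]; ring
      have hb' : b = B0 + phi p r y := by rw [hy]; ring
      have hc' : c = C0 + phi p r z := by rw [hz]; ring
      refine ⟨⟨(x, y, z), (key x y z).mp ?_⟩, ?_⟩
      · rw [← ha', ← hb', ← hc']
        exact heq
      · apply Subtype.ext
        simp only [f]
        rw [← ha', ← hb', ← hc']
  haveI : NeZero p := ⟨(Fact.out : p.Prime).ne_zero⟩
  rw [← Nat.card_eq_of_bijective f hbij, lin3_card α β γ e hcoef, ZMod.card]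

lemma mul_card (m : ZMod p) :
    Fintype.card {w : ZMod p × ZMod p // w.1 * w.2 = m} =
      if m = 0 then 2 * p - 1 else p - 1 := by
  haveI : NeZero p := ⟨(Fact.out : p.Prime).ne_zero⟩
  by_cases hm : m = 0
  · rw [if_pos hm]
    subst hm
    have ec : {w : ZMod p × ZMod p // ¬(w.1 * w.2 = 0)} ≃ (ZMod p)ˣ × (ZMod p)ˣ :=
    { toFun := fun w => (Units.mk0 w.1.1 (left_ne_zero_of_mul w.2),
        Units.mk0 w.1.2 (right_ne_zero_of_mul w.2))
      invFun := fun u => ⟨((u.1 : ZMod p), (u.2 : ZMod p)),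
        mul_ne_zero u.1.ne_zero u.2.ne_zero⟩
      left_inv := fun w => rfl
      right_inv := fun u => by
        apply Prod.ext <;> apply Units.ext <;> rfl }
    have h2 := Fintype.card_subtype_compl (fun w : ZMod p × ZMod p => ¬(w.1 * w.2 = 0))
    rw [Fintype.card_congr (Equiv.subtypeEquivRight
        (fun w : ZMod p × ZMod p => (not_not (a := w.1 * w.2 = 0))))] at h2
    rw [h2, Fintype.card_congr ec, Fintype.card_prod, Fintype.card_prod,
      ZMod.card, ZMod.card_units]
    obtain ⟨k, rfl⟩ : ∃ k, p = k + 1 := ⟨p - 1, by have := (Fact.out : p.Prime).pos; omega⟩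
    have h3 : (k + 1) * (k + 1) = k * k + (2 * k + 1) := by ring
    simp only [Nat.add_sub_cancel, h3, Nat.add_sub_cancel_left]
    omega
  · rw [if_neg hm]
    have e : {w : ZMod p × ZMod p // w.1 * w.2 = m} ≃ (ZMod p)ˣ :=
    { toFun := fun w => Units.mk0 w.1.1 (fun h => hm (by rw [← w.2, h, zero_mul]))
      invFun := fun u => ⟨((u : ZMod p), ((u⁻¹ : (ZMod p)ˣ) : ZMod p) * m), by
        rw [← mul_assoc, Units.mul_inv, one_mul]⟩
      left_inv := fun w => by
        obtain ⟨⟨w1, w2⟩, hw⟩ := w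
        have hw1 : w1 ≠ 0 := fun h => hm (by rw [← hw, h, zero_mul])
        apply Subtype.ext
        refine Prod.ext rfl ?_
        show ((Units.mk0 w1 _)⁻¹ : (ZMod p)ˣ).val * m = w2
        rw [Units.val_inv_eq_inv_val, Units.val_mk0]
        field_simp
        linear_combination -hw
      right_inv := fun u => Units.ext rfl }
    rw [Fintype.card_congr e, ZMod.card_units]

lemma root_card (hp : Odd p) (t : ℤ) (hleg : legendreSym p (t ^ 2 - 4) = 1) :
    (Finset.univ.filter (fun a : ZMod p => a * ((t : ZMod p) - a) - 1 = 0)).card = 2 := by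
  haveI : NeZero p := ⟨(Fact.out : p.Prime).ne_zero⟩
  have hp3 : 3 ≤ p := by
    have h2 := (Fact.out : p.Prime).two_le
    obtain ⟨k, hk⟩ := hp
    omega
  have hp2 : (2 : ZMod p) ≠ 0 := by
    have : ((2 : ℕ) : ZMod p) ≠ 0 := by
      rw [Ne, ZMod.natCast_eq_zero_iff]
      intro h
      have := Nat.le_of_dvd (by norm_num) h
      omega
    simpa using this
  have ha : ((t ^ 2 - 4 : ℤ) : ZMod p) ≠ 0 := by
    intro h
    have := (legendreSym.eq_zero_iff p _).mpr h
    rw [hleg] at this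
    exact one_ne_zero this
  obtain ⟨s, hs⟩ := (legendreSym.eq_one_iff p ha).mp hleg
  have hs' : s * s = ((t : ℤ) : ZMod p) ^ 2 - 4 := by
    rw [← hs]; push_cast; ring
  have hs0 : s ≠ 0 := fun h => ha (by rw [hs, h, mul_zero])
  set tb : ZMod p := ((t : ℤ) : ZMod p) with htb
  set r1 : ZMod p := (tb + s) * (2 : ZMod p)⁻¹ with hr1
  set r2 : ZMod p := (tb - s) * (2 : ZMod p)⁻¹ with hr2
  have hne : r1 ≠ r2 := by
    intro h
    apply hs0
    rw [hr1, hr2] at h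
    field_simp at h
    have h2s : (2 : ZMod p) * s = 0 := by linear_combination h
    rcases mul_eq_zero.mp h2s with h' | h'
    · exact absurd h' hp2
    · exact h'
  have hfilter : Finset.univ.filter (fun a : ZMod p => a * (tb - a) - 1 = 0) = {r1, r2} := by
    ext a
    simp only [Finset.mem_filter, Finset.mem_univ, true_and, Finset.mem_insert,
      Finset.mem_singleton]
    constructor
    · intro h
      have hfac : (2 * a - tb - s) * (2 * a - tb + s) = 0 := by
        linear_combination (-4 : ZMod p) * h - hs'
      rcases mul_eq_zero.mp hfac with h' | h'
      · left; rw [hr1]; field_simp; linear_combination h'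
      · right; rw [hr2]; field_simp; linear_combination h'
    · rintro (rfl | rfl)
      · rw [hr1]; field_simp; linear_combination -hs'
      · rw [hr2]; field_simp; linear_combination -hs'
  rw [hfilter, Finset.card_insert_of_notMem (by simpa using hne), Finset.card_singleton]

lemma base_card (hp : Odd p) (t : ℤ) (hleg : legendreSym p (t ^ 2 - 4) = 1) :
    Nat.card {v : ZMod p × ZMod p × ZMod p //
      v.2.1 * v.2.2 = v.1 * ((t : ZMod p) - v.1) - 1} = p ^ 2 + p := by
  haveI : NeZero p := ⟨(Fact.out : p.Prime).ne_zero⟩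
  classical
  have e1 : {v : ZMod p × ZMod p × ZMod p // v.2.1 * v.2.2 = v.1 * ((t : ZMod p) - v.1) - 1} ≃
      Σ a : ZMod p, {w : ZMod p × ZMod p // w.1 * w.2 = a * ((t : ZMod p) - a) - 1} :=
    { toFun := fun v => ⟨v.1.1, ⟨(v.1.2.1, v.1.2.2), v.2⟩⟩
      invFun := fun s => ⟨(s.1, s.2.1.1, s.2.1.2), s.2.2⟩
      left_inv := fun v => rfl
      right_inv := fun s => rfl }
  rw [Nat.card_congr e1, Nat.card_eq_fintype_card, Fintype.card_sigma]
  have hterm : ∀ a : ZMod p,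
      Fintype.card {w : ZMod p × ZMod p // w.1 * w.2 = a * ((t : ZMod p) - a) - 1}
      = if a * ((t : ZMod p) - a) - 1 = 0 then 2 * p - 1 else p - 1 := by
    intro a
    rw [mul_card]
  simp_rw [hterm]
  rw [Finset.sum_ite, Finset.sum_const, Finset.sum_const, smul_eq_mul, smul_eq_mul]
  rw [root_card hp t hleg]
  have hcard2 : (Finset.univ.filter (fun a : ZMod p => ¬(a * ((t : ZMod p) - a) - 1 = 0))).card
      = p - 2 := by
    rw [Finset.filter_not, Finset.card_sdiff_of_subset (Finset.filter_subset _ _), root_card hp t hleg,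
      Finset.card_univ, ZMod.card]
  rw [hcard2]
  have hp3 : 3 ≤ p := by
    have h2 := (Fact.out : p.Prime).two_le
    obtain ⟨k, hk⟩ := hp
    omega
  obtain ⟨k, rfl⟩ : ∃ k, p = k + 3 := ⟨p - 3, by omega⟩
  have e1 : 2 * (k + 3) - 1 = 2 * k + 5 := by omega
  have e2 : k + 3 - 2 = k + 1 := by omega
  have e3 : k + 3 - 1 = k + 2 := by omega
  rw [e1, e2, e3]
  ring

variable {p : ℕ} [Fact p.Prime]

def sl2equiv (R : Type*) [CommRing R] (τ : R) :
    {γ : Matrix.SpecialLinearGroup (Fin 2) R //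
        Matrix.trace (γ : Matrix (Fin 2) (Fin 2) R) = τ} ≃
    {v : R × R × R // v.2.1 * v.2.2 = v.1 * (τ - v.1) - 1} where
  toFun γ := ⟨(γ.1.1 0 0, γ.1.1 0 1, γ.1.1 1 0), by
    have hd := γ.1.2
    have htr := γ.2
    rw [Matrix.trace_fin_two] at htr
    rw [Matrix.det_fin_two] at hd
    simp only
    linear_combination -hd + (γ.1.1 0 0) * htr⟩
  invFun v := ⟨⟨!![v.1.1, v.1.2.1; v.1.2.2, τ - v.1.1], by
      rw [Matrix.det_fin_two_of]
      linear_combination -v.2⟩, by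
      rw [Matrix.trace_fin_two]
      simp⟩
  left_inv γ := by
    apply Subtype.ext
    apply Subtype.ext
    have htr := γ.2
    rw [Matrix.trace_fin_two] at htr
    ext i j
    fin_cases i <;> fin_cases j <;>
      simp [Matrix.SpecialLinearGroup.coe_mk] <;> linear_combination -htr
  right_inv v := by
    apply Subtype.ext
    simp
lemma triple_card (hp : Odd p) (t : ℤ) (hleg : legendreSym p (t ^ 2 - 4) = 1) :
    ∀ r : ℕ, 1 ≤ r →
      Nat.card {v : ZMod (p ^ r) × ZMod (p ^ r) × ZMod (p ^ r) //
        v.2.1 * v.2.2 = v.1 * ((t : ZMod (p ^ r)) - v.1) - 1}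
      = p ^ (2 * (r - 1)) * (p ^ 2 + p) := by
  intro r hr
  induction r, hr using Nat.le_induction with
  | base =>
    rw [pow_one p]
    simpa using base_card hp t hleg
  | succ r hr IH =>
    haveI := pNZ p r
    haveI := pNZ p (r + 1)
    classical
    let π : {v : ZMod (p ^ (r + 1)) × ZMod (p ^ (r + 1)) × ZMod (p ^ (r + 1)) //
          v.2.1 * v.2.2 = v.1 * ((t : ZMod (p ^ (r + 1))) - v.1) - 1} →
        {v : ZMod (p ^ r) × ZMod (p ^ r) × ZMod (p ^ r) //
          v.2.1 * v.2.2 = v.1 * ((t : ZMod (p ^ r)) - v.1) - 1} :=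
      fun v => ⟨(redr p r v.1.1, redr p r v.1.2.1, redr p r v.1.2.2), by
        have h := congrArg (redr p r) v.2
        rw [map_mul, map_sub, map_mul, map_sub, map_one, map_intCast] at h
        exact h⟩
    have hfib : ∀ s, Nat.card {x // π x = s} = p ^ 2 := by
      rintro ⟨⟨a0, b0, c0⟩, hs⟩
      have e : {x // π x = ⟨(a0, b0, c0), hs⟩} ≃
          {v : ZMod (p ^ (r + 1)) × ZMod (p ^ (r + 1)) × ZMod (p ^ (r + 1)) //
            (v.2.1 * v.2.2 = v.1 * ((t : ZMod (p ^ (r + 1))) - v.1) - 1) ∧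
            redr p r v.1 = a0 ∧ redr p r v.2.1 = b0 ∧ redr p r v.2.2 = c0} :=
        { toFun := fun x => ⟨x.1.1, x.1.2, by
            have h := Subtype.ext_iff.mp x.2
            simp only [π] at h
            exact ⟨congrArg Prod.fst h, congrArg (fun z => z.2.1) h,
              congrArg (fun z => z.2.2) h⟩⟩
          invFun := fun v => ⟨⟨v.1, v.2.1⟩, Subtype.ext (by
            obtain ⟨h0, h1, h2, h3⟩ := v.2
            exact Prod.ext h1 (Prod.ext h2 h3))⟩
          left_inv := fun x => rfl
          right_inv := fun v => rfl }
      rw [Nat.card_congr e]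
      exact fiber_card r hr t hleg a0 b0 c0 hs
    have hsig : Nat.card {v : ZMod (p ^ (r + 1)) × ZMod (p ^ (r + 1)) × ZMod (p ^ (r + 1)) //
          v.2.1 * v.2.2 = v.1 * ((t : ZMod (p ^ (r + 1))) - v.1) - 1}
        = ∑ s : {v : ZMod (p ^ r) × ZMod (p ^ r) × ZMod (p ^ r) //
            v.2.1 * v.2.2 = v.1 * ((t : ZMod (p ^ r)) - v.1) - 1},
            Nat.card {x // π x = s} := by
      rw [Nat.card_congr (Equiv.sigmaFiberEquiv π).symm, Nat.card_eq_fintype_card,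
        Fintype.card_sigma]
      congr 1
      ext s
      rw [Nat.card_eq_fintype_card]
    rw [hsig]
    simp_rw [hfib]
    rw [Finset.sum_const, Finset.card_univ, smul_eq_mul, ← Nat.card_eq_fintype_card, IH]
    rw [show 2 * (r + 1 - 1) = 2 * (r - 1) + 2 by omega, pow_add]
    ring

theorem stmt_7 (p : ℕ) [Fact p.Prime] (hp : Odd p) (r : ℕ) (hr : 1 ≤ r) (t : ℤ)
    (ht : legendreSym p (t ^ 2 - 4) = 1) :
    Nat.card {γ : Matrix.SpecialLinearGroup (Fin 2) (ZMod (p ^ r)) //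
        Matrix.trace (γ : Matrix (Fin 2) (Fin 2) (ZMod (p ^ r))) = (t : ZMod (p ^ r))}
      = p ^ (2 * r - 1) * (p + 1) := by
  rw [Nat.card_congr (sl2equiv (ZMod (p ^ r)) ((t : ZMod (p ^ r)))),
    triple_card hp t ht r hr]
  have h1 : p ^ 2 + p = p * (p + 1) := by ring
  rw [h1, ← mul_assoc, ← pow_succ, show 2 * (r - 1) + 1 = 2 * r - 1 by omega]
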